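/- For integers b ≥ 1 and q with 1 ≤ q ≤ 2^b, define the minimum replication rate r(q) as the minimum over all valid mapping schemas (assignments of the 2^b strings to reducers of size ≤ q covering all Hamming-distance-1 pairs) of (total assignments)/2^b. If c ≥ 2 divides b and q = 2^{b/c}, then r(q) = c, i.e., the lower bound b/log₂(q) is achieved exactly. -/

import Mathlib

open Finset Real

namespace SplitOpt

lemma hd_eq_sum {n : ℕ} (u v : Fin n → Bool) :
    hammingDist u v = ∑ i, if u i ≠ v i then 1 else 0 := by
  rw [hammingDist, Finset.card_filter]

lemma hd_succ {n : ℕ} (u v : Fin (n+1) → Bool) :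
    hammingDist u v = (if u 0 ≠ v 0 then 1 else 0) + hammingDist (Fin.tail u) (Fin.tail v) := by
  rw [hd_eq_sum, hd_eq_sum, Fin.sum_univ_succ]
  rfl


/-- the unique differing coordinate -/
lemma dist_one {n : ℕ} {u v : Fin n → Bool} (h : hammingDist u v = 1) :
    ∃ j, u j ≠ v j ∧ ∀ i, i ≠ j → u i = v i := by
  rw [hammingDist, Finset.card_eq_one] at h
  obtain ⟨j, hj⟩ := h
  refine ⟨j, ?_, ?_⟩
  · have : j ∈ ({j} : Finset (Fin n)) := Finset.mem_singleton_self j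
    rw [← hj] at this
    simpa using this
  · intro i hi
    by_contra hne
    have : i ∈ ({j} : Finset (Fin n)) := by
      rw [← hj]; simpa using hne
    exact hi (Finset.mem_singleton.mp this)

lemma dist_one_of {n : ℕ} {u v : Fin n → Bool} (j : Fin n) (hj : u j ≠ v j)
    (ho : ∀ i, i ≠ j → u i = v i) : hammingDist u v = 1 := by
  rw [hammingDist]
  have hs : ({i | u i ≠ v i} : Finset (Fin n)) = {j} := by
    ext i
    simp only [Finset.mem_filter, Finset.mem_univ, true_and, Finset.mem_singleton]
    constructor
    · intro h; by_contra hij; exact h (ho i hij)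
    · rintro rfl; exact hj
  rw [hs, Finset.card_singleton]

/-- ordered pairs at Hamming distance 1 inside `S` -/
def Ep (n : ℕ) (S : Finset (Fin n → Bool)) : ℕ :=
  ((S ×ˢ S).filter fun p => hammingDist p.1 p.2 = 1).card

def sec {n : ℕ} (a : Bool) (S : Finset (Fin (n+1) → Bool)) : Finset (Fin n → Bool) :=
  (S.filter fun u => u 0 = a).image Fin.tail

lemma mem_sec {n : ℕ} {a : Bool} {S : Finset (Fin (n+1) → Bool)} {x : Fin n → Bool} :
    x ∈ sec a S ↔ Fin.cons a x ∈ S := by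
  constructor
  · rintro hx
    obtain ⟨u, hu, rfl⟩ := Finset.mem_image.mp hx
    obtain ⟨huS, hua⟩ := Finset.mem_filter.mp hu
    rwa [← hua, Fin.cons_self_tail]
  · intro h
    exact Finset.mem_image.mpr ⟨Fin.cons a x, Finset.mem_filter.mpr ⟨h, by simp⟩, by simp⟩

lemma card_sec {n : ℕ} (a : Bool) (S : Finset (Fin (n+1) → Bool)) :
    (sec a S).card = (S.filter fun u => u 0 = a).card := by
  apply Finset.card_image_of_injOn
  intro u hu v hv htv
  have hu0 := (Finset.mem_filter.mp hu).2
  have hv0 := (Finset.mem_filter.mp hv).2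
  have : Fin.cons (u 0) (Fin.tail u) = Fin.cons (v 0) (Fin.tail v) := by
    rw [hu0, hv0, htv]
  rwa [Fin.cons_self_tail, Fin.cons_self_tail] at this

lemma card_split {n : ℕ} (S : Finset (Fin (n+1) → Bool)) :
    S.card = (sec false S).card + (sec true S).card := by
  rw [card_sec, card_sec]
  have := Finset.card_filter_add_card_filter_not (s := S)
    (p := fun u => u 0 = false)
  have he : S.filter (fun u => ¬ u 0 = false) = S.filter (fun u => u 0 = true) := by
    apply Finset.filter_congr
    intro u _
    cases h : u 0 <;> simp
  rw [he] at this
  exact this.symm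

/-- flip the first coordinate -/
def flp {n : ℕ} (u : Fin (n+1) → Bool) : Fin (n+1) → Bool :=
  Function.update u 0 (!(u 0))

lemma flp_zero {n : ℕ} (u : Fin (n+1) → Bool) : flp u 0 = !(u 0) := by
  simp [flp]

lemma flp_tail {n : ℕ} (u : Fin (n+1) → Bool) : Fin.tail (flp u) = Fin.tail u := by
  funext i
  simp [Fin.tail, flp, Function.update_of_ne (Fin.succ_ne_zero i)]

lemma flp_flp {n : ℕ} (u : Fin (n+1) → Bool) : flp (flp u) = u := by
  funext i
  rcases eq_or_ne i 0 with rfl | hi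
  · simp [flp]
  · simp [flp, Function.update_of_ne hi]

lemma dist_flp {n : ℕ} (u : Fin (n+1) → Bool) : hammingDist u (flp u) = 1 := by
  rw [hd_succ, flp_tail, hammingDist_self, flp_zero]
  cases u 0 <;> simp

lemma eq_flp_of {n : ℕ} {u v : Fin (n+1) → Bool} (h : hammingDist u v = 1)
    (h0 : u 0 ≠ v 0) : v = flp u := by
  rw [hd_succ] at h
  rw [if_pos h0] at h
  have ht : Fin.tail u = Fin.tail v := by
    have : hammingDist (Fin.tail u) (Fin.tail v) = 0 := by omega
    exact eq_of_hammingDist_eq_zero this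
  have hv0 : v 0 = !(u 0) := by
    cases hu : u 0 <;> cases hv : v 0 <;> simp_all
  funext i
  rcases eq_or_ne i 0 with rfl | hi
  · rw [hv0, flp_zero]
  · rw [flp, Function.update_of_ne hi]
    obtain ⟨j, rfl⟩ := Fin.exists_succ_eq.mpr hi
    have := congrFun ht j
    simpa [Fin.tail] using this.symm

/-- strings whose flip is also in S -/
def Tset {n : ℕ} (S : Finset (Fin (n+1) → Bool)) : Finset (Fin (n+1) → Bool) :=
  S.filter fun u => flp u ∈ S

lemma Ep_succ {n : ℕ} (S : Finset (Fin (n+1) → Bool)) :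
    Ep (n+1) S = Ep n (sec false S) + Ep n (sec true S) + (Tset S).card := by
  classical
  set P := ((S ×ˢ S).filter fun p => hammingDist p.1 p.2 = 1) with hP
  have hsplit := Finset.card_filter_add_card_filter_not (s := P)
    (p := fun p => p.1 0 = p.2 0)
  -- diff part = Tset
  have hdiff : (P.filter fun p => ¬ p.1 0 = p.2 0).card = (Tset S).card := by
    apply Finset.card_bij (fun p _ => p.1)
    · intro p hp
      simp only [hP, Finset.mem_filter, Finset.mem_product] at hp
      obtain ⟨⟨⟨h1, h2⟩, hd⟩, hne⟩ := hp
      have : p.2 = flp p.1 := eq_flp_of hd hne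
      exact Finset.mem_filter.mpr ⟨h1, by rw [← this]; exact h2⟩
    · intro p hp q hq hpq
      simp only [hP, Finset.mem_filter, Finset.mem_product] at hp hq
      have h1 : p.2 = flp p.1 := eq_flp_of hp.1.2 hp.2
      have h2 : q.2 = flp q.1 := eq_flp_of hq.1.2 hq.2
      exact Prod.ext hpq (by rw [h1, h2, hpq])
    · intro u hu
      obtain ⟨huS, hfu⟩ := Finset.mem_filter.mp hu
      refine ⟨(u, flp u), ?_, rfl⟩
      simp only [hP, Finset.mem_filter, Finset.mem_product]
      refine ⟨⟨⟨huS, hfu⟩, dist_flp u⟩, ?_⟩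
      rw [flp_zero]
      cases u 0 <;> simp
  -- same part = Ep secf + Ep sect
  have hsame : (P.filter fun p => p.1 0 = p.2 0).card
      = Ep n (sec false S) + Ep n (sec true S) := by
    set Q := P.filter fun p => p.1 0 = p.2 0 with hQ
    have hq2 := Finset.card_filter_add_card_filter_not (s := Q)
      (p := fun p => p.1 0 = false)
    have key : ∀ a : Bool, (Q.filter fun p => p.1 0 = a).card
        = Ep n (sec a S) := by
      intro a
      show _ = ((sec a S ×ˢ sec a S).filter fun p => hammingDist p.1 p.2 = 1).card
      apply Finset.card_bij' (fun p _ => (Fin.tail p.1, Fin.tail p.2))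
        (fun q _ => (Fin.cons a q.1, Fin.cons a q.2))
      · -- left_inv
        rintro ⟨p1, p2⟩ hp
        simp only [hQ, hP, Finset.mem_filter, Finset.mem_product] at hp
        obtain ⟨⟨_, heq⟩, ha⟩ := hp
        have ha2 : p2 0 = a := by rw [← heq, ha]
        have e1 : Fin.cons a (Fin.tail p1) = p1 := by rw [← ha]; exact Fin.cons_self_tail p1
        have e2 : Fin.cons a (Fin.tail p2) = p2 := by rw [← ha2]; exact Fin.cons_self_tail p2
        simp only [Prod.mk.injEq]
        exact ⟨e1, e2⟩
      · -- right_inv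
        rintro ⟨q1, q2⟩ hq
        simp only [Prod.mk.injEq]
        exact ⟨by simp, by simp⟩
      · -- hi
        rintro ⟨p1, p2⟩ hp
        simp only [hQ, hP, Finset.mem_filter, Finset.mem_product] at hp
        obtain ⟨⟨⟨⟨h1, h2⟩, hd⟩, heq⟩, ha⟩ := hp
        have ha2 : p2 0 = a := by rw [← heq, ha]
        simp only [Finset.mem_filter, Finset.mem_product]
        refine ⟨⟨?_, ?_⟩, ?_⟩
        · rw [mem_sec, ← ha, Fin.cons_self_tail]; exact h1
        · rw [mem_sec, ← ha2, Fin.cons_self_tail]; exact h2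
        · rw [hd_succ] at hd
          rw [if_neg (by simp [heq])] at hd
          simpa using hd
      · -- hj
        rintro ⟨q1, q2⟩ hq
        simp only [Finset.mem_filter, Finset.mem_product] at hq
        obtain ⟨⟨h1, h2⟩, hd⟩ := hq
        simp only [hQ, hP, Finset.mem_filter, Finset.mem_product]
        refine ⟨⟨⟨⟨mem_sec.mp h1, mem_sec.mp h2⟩, ?_⟩, by simp⟩, by simp⟩
        rw [hd_succ]
        simp [Fin.tail_cons, hd]
    have hneg : (Q.filter fun p => ¬ p.1 0 = false) = Q.filter fun p => p.1 0 = true := by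
      apply Finset.filter_congr
      intro p _
      cases h : p.1 0 <;> simp
    rw [hneg] at hq2
    rw [key false, key true] at hq2
    exact hq2.symm
  have hE : Ep (n+1) S = P.card := rfl
  rw [hE, ← hsplit, hsame, hdiff]

lemma Tset_card_le {n : ℕ} (S : Finset (Fin (n+1) → Bool)) :
    ∃ t : ℕ, (Tset S).card = 2 * t ∧ t ≤ (sec false S).card ∧ t ≤ (sec true S).card := by
  classical
  set Tf := (Tset S).filter fun u => u 0 = false with hTf
  set Tt := (Tset S).filter fun u => u 0 = true with hTt
  refine ⟨Tf.card, ?_, ?_, ?_⟩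
  · have hsplit := Finset.card_filter_add_card_filter_not (s := Tset S)
      (p := fun u => u 0 = false)
    have hneg : ((Tset S).filter fun u => ¬ u 0 = false) = Tt := by
      apply Finset.filter_congr
      intro u _
      cases h : u 0 <;> simp
    rw [hneg] at hsplit
    have hbij : Tt.card = Tf.card := by
      apply Finset.card_bij (fun u _ => flp u)
      · intro u hu
        simp only [hTt, hTf, Tset, Finset.mem_filter] at hu ⊢
        refine ⟨⟨hu.1.2, by rw [flp_flp]; exact hu.1.1⟩, by rw [flp_zero, hu.2]; rfl⟩
      · intro u hu v hv huv
        have := congrArg flp huv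
        rwa [flp_flp, flp_flp] at this
      · intro v hv
        simp only [hTt, hTf, Tset, Finset.mem_filter] at hv ⊢
        exact ⟨flp v, ⟨⟨hv.1.2, by rw [flp_flp]; exact hv.1.1⟩,
          by rw [flp_zero, hv.2]; rfl⟩, flp_flp v⟩
    simp only [hTf, hTt] at hsplit hbij ⊢
    rw [← hsplit, hbij]
    ring
  · rw [card_sec]
    apply Finset.card_le_card
    intro u hu
    simp only [hTf, Tset, Finset.mem_filter] at hu ⊢
    exact ⟨hu.1.1, hu.2⟩
  · rw [card_sec]
    apply Finset.card_le_card_of_injOn (fun u => flp u)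
    · intro u hu
      simp only [hTf, Tset, Finset.mem_filter, Finset.mem_coe] at hu ⊢
      exact ⟨hu.1.2, by rw [flp_zero, hu.2]; rfl⟩
    · intro u hu v hv huv
      have := congrArg flp huv
      rwa [flp_flp, flp_flp] at this

lemma two_rpow_le (t : ℝ) (h0 : 0 ≤ t) (h1 : t ≤ 1) : (2:ℝ) ^ t ≤ 1 + t := by
  have hconv := convexOn_exp.2 (Set.mem_univ (0:ℝ)) (Set.mem_univ (Real.log 2))
    (by linarith : (0:ℝ) ≤ 1 - t) h0 (by ring)
  simp only [smul_eq_mul, mul_zero, zero_add, Real.exp_zero,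
    Real.exp_log (by norm_num : (0:ℝ) < 2)] at hconv
  have : (2:ℝ) ^ t = Real.exp (t * Real.log 2) := by
    rw [Real.rpow_def_of_pos (by norm_num : (0:ℝ) < 2)]
    ring_nf
  rw [this]
  linarith

lemma le_logb_one_add (t : ℝ) (h0 : 0 ≤ t) (h1 : t ≤ 1) : t ≤ Real.logb 2 (1 + t) := by
  rw [Real.le_logb_iff_rpow_le (by norm_num : (1:ℝ) < 2) (by linarith)]
  exact two_rpow_le t h0 h1

lemma logsum (a b : ℝ) (ha : 1 ≤ a) (hab : a ≤ b) :
    a * Real.logb 2 a + b * Real.logb 2 b + 2 * a ≤ (a + b) * Real.logb 2 (a + b) := by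
  have hb : 1 ≤ b := le_trans ha hab
  have hbpos : (0:ℝ) < b := by linarith
  have h1 : a * Real.logb 2 (2 * a) ≤ a * Real.logb 2 (a + b) := by
    apply mul_le_mul_of_nonneg_left _ (by linarith)
    exact Real.logb_le_logb_of_le (by norm_num : (1:ℝ)<2) (by linarith) (by linarith)
  have h2 : Real.logb 2 (2 * a) = 1 + Real.logb 2 a := by
    rw [Real.logb_mul (by norm_num) (by linarith)]
    simp [Real.logb_self_eq_one]
  have h3 : b * Real.logb 2 ((a+b)/b) ≤ b * Real.logb 2 (a + b) - b * Real.logb 2 b := by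
    rw [Real.logb_div (by linarith) (by linarith)]
    ring_nf; exact le_refl _
  have h4 : a ≤ b * Real.logb 2 ((a+b)/b) := by
    have ht0 : 0 ≤ a / b := by positivity
    have ht1 : a / b ≤ 1 := by rw [div_le_one hbpos]; exact hab
    have hlog := le_logb_one_add (a/b) ht0 ht1
    have heq : (a+b)/b = 1 + a/b := by field_simp; ring
    rw [heq]
    calc a = b * (a/b) := by field_simp
    _ ≤ b * Real.logb 2 (1 + a/b) := mul_le_mul_of_nonneg_left hlog (by linarith)
  nlinarith [h1, h2, h3, h4]

lemma logsum' (a b t : ℝ) (ha : 1 ≤ a) (hb : 1 ≤ b) (hta : t ≤ a) (htb : t ≤ b) :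
    a * Real.logb 2 a + b * Real.logb 2 b + 2 * t ≤ (a + b) * Real.logb 2 (a + b) := by
  rcases le_total a b with h | h
  · have := logsum a b ha h
    linarith
  · have := logsum b a hb h
    have hc : b + a = a + b := add_comm b a
    rw [hc] at this
    linarith

lemma combine (s0 s1 E0 E1 t : ℕ)
    (i0 : (E0:ℝ) ≤ (s0:ℝ) * Real.logb 2 (s0:ℝ))
    (i1 : (E1:ℝ) ≤ (s1:ℝ) * Real.logb 2 (s1:ℝ))
    (ht0 : t ≤ s0) (ht1 : t ≤ s1) :
    (E0:ℝ) + E1 + 2*t ≤ ((s0:ℝ)+s1) * Real.logb 2 ((s0:ℝ)+s1) := by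
  have hE0 : (0:ℝ) ≤ E0 := Nat.cast_nonneg _
  have hE1 : (0:ℝ) ≤ E1 := Nat.cast_nonneg _
  rcases Nat.eq_zero_or_pos s0 with h0 | h0
  · have htz : t = 0 := by omega
    subst htz; subst h0
    have hi : (E0:ℝ) ≤ 0 := by simpa using i0
    simp only [Nat.cast_zero, zero_add, mul_zero, add_zero]
    linarith [i1]
  rcases Nat.eq_zero_or_pos s1 with h1 | h1
  · have htz : t = 0 := by omega
    subst htz; subst h1
    have hi : (E1:ℝ) ≤ 0 := by simpa using i1
    simp only [Nat.cast_zero, add_zero, mul_zero]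
    linarith [i0]
  · have h0' : (1:ℝ) ≤ s0 := by exact_mod_cast h0
    have h1' : (1:ℝ) ≤ s1 := by exact_mod_cast h1
    have hta : (t:ℝ) ≤ s0 := by exact_mod_cast ht0
    have htb : (t:ℝ) ≤ s1 := by exact_mod_cast ht1
    have := logsum' (s0:ℝ) (s1:ℝ) (t:ℝ) h0' h1' hta htb
    linarith

lemma Ep_zero (S : Finset (Fin 0 → Bool)) : Ep 0 S = 0 := by
  rw [Ep, Finset.card_eq_zero, Finset.filter_eq_empty_iff]
  rintro ⟨u, v⟩ _
  have h : hammingDist u v ≤ 0 := by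
    have h2 := hammingDist_le_card_fintype (x := u) (y := v)
    simpa using h2
  simp only []
  omega

lemma iso (n : ℕ) (S : Finset (Fin n → Bool)) :
    (Ep n S : ℝ) ≤ (S.card : ℝ) * Real.logb 2 (S.card : ℝ) := by
  induction n with
  | zero =>
    rw [Ep_zero]
    rcases Nat.eq_zero_or_pos S.card with h | h
    · rw [h]; simp
    · have h1 : (1:ℝ) ≤ (S.card : ℝ) := by exact_mod_cast h
      have := Real.logb_nonneg (by norm_num : (1:ℝ) < 2) h1
      push_cast
      positivity
  | succ n ih =>
    obtain ⟨t, hT, ht0, ht1⟩ := Tset_card_le S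
    have hE := Ep_succ S
    have hcard := card_split S
    have key := combine (sec false S).card (sec true S).card
      (Ep n (sec false S)) (Ep n (sec true S)) t
      (ih (sec false S)) (ih (sec true S)) ht0 ht1
    rw [hE, hcard, hT]
    push_cast
    push_cast at key
    linarith

lemma bool_flip_ne (b : Bool) : (!b) ≠ b := by cases b <;> simp

lemma sphere_card {n : ℕ} (u : Fin n → Bool) :
    ((univ : Finset (Fin n → Bool)).filter fun v => hammingDist u v = 1).card = n := by
  have hinj : Function.Injective (fun j : Fin n => Function.update u j (!(u j))) := by
    intro j k hjk
    by_contra hne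
    have h1 := congrFun hjk j
    simp only [Function.update_self] at h1
    rw [Function.update_of_ne hne] at h1
    exact bool_flip_ne (u j) h1
  have himg : ((univ : Finset (Fin n → Bool)).filter fun v => hammingDist u v = 1)
      = (univ : Finset (Fin n)).image (fun j => Function.update u j (!(u j))) := by
    ext v
    simp only [Finset.mem_filter, Finset.mem_univ, true_and, Finset.mem_image]
    constructor
    · intro hd
      obtain ⟨j, hj, ho⟩ := dist_one hd
      refine ⟨j, ?_⟩
      funext i
      rcases eq_or_ne i j with rfl | hij
      · rw [Function.update_self]
        revert hj
        cases u i <;> cases v i <;> simp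
      · rw [Function.update_of_ne hij]
        exact ho i hij
    · rintro ⟨j, _, rfl⟩
      apply dist_one_of j
      · rw [Function.update_self]
        intro hcontra
        exact bool_flip_ne (u j) hcontra.symm
      · intro i hi
        rw [Function.update_of_ne hi]
  rw [himg, Finset.card_image_of_injective _ hinj, Finset.card_univ, Fintype.card_fin]

lemma card_cube (n : ℕ) : (univ : Finset (Fin n → Bool)).card = 2 ^ n := by
  rw [Finset.card_univ, Fintype.card_fun, Fintype.card_bool, Fintype.card_fin]

lemma Ep_univ (n : ℕ) : Ep n (univ : Finset (Fin n → Bool)) = n * 2 ^ n := by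
  rw [Ep, Finset.card_filter, Finset.sum_product]
  have h1 : ∀ u : Fin n → Bool,
      (∑ v : Fin n → Bool, if hammingDist u v = 1 then 1 else 0) = n := by
    intro u
    rw [← Finset.card_filter]
    exact sphere_card u
  calc (∑ u : Fin n → Bool, ∑ v : Fin n → Bool, if hammingDist u v = 1 then 1 else 0)
      = ∑ _u : Fin n → Bool, n := Finset.sum_congr rfl fun u _ => h1 u
    _ = 2 ^ n * n := by rw [Finset.sum_const, Finset.card_univ, smul_eq_mul,
        Fintype.card_fun, Fintype.card_bool, Fintype.card_fin]
    _ = n * 2 ^ n := mul_comm _ _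

lemma cover_le {n p : ℕ} (R : Fin p → Finset (Fin n → Bool))
    (hcov : ∀ u v, hammingDist u v = 1 → ∃ i, u ∈ R i ∧ v ∈ R i) :
    n * 2 ^ n ≤ ∑ i, Ep n (R i) := by
  rw [← Ep_univ n]
  show (((univ : Finset (Fin n → Bool)) ×ˢ univ).filter
      fun pr => hammingDist pr.1 pr.2 = 1).card ≤ _
  calc (((univ : Finset (Fin n → Bool)) ×ˢ univ).filter
        fun pr => hammingDist pr.1 pr.2 = 1).card
      ≤ ((univ : Finset (Fin p)).biUnion fun i =>
          (R i ×ˢ R i).filter fun pr => hammingDist pr.1 pr.2 = 1).card := by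
        apply Finset.card_le_card
        rintro ⟨u, v⟩ hp
        simp only [Finset.mem_filter, Finset.mem_product, Finset.mem_univ, true_and] at hp
        obtain ⟨i, hu, hv⟩ := hcov u v hp
        refine Finset.mem_biUnion.mpr ⟨i, Finset.mem_univ i, ?_⟩
        exact Finset.mem_filter.mpr ⟨Finset.mem_product.mpr ⟨hu, hv⟩, hp⟩
    _ ≤ ∑ i, Ep n (R i) := Finset.card_biUnion_le

lemma card_term_le {n : ℕ} (m : ℕ) (S : Finset (Fin n → Bool)) (hS : S.card ≤ 2 ^ m) :
    (Ep n S : ℝ) ≤ (S.card : ℝ) * m := by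
  refine le_trans (iso n S) ?_
  rcases Nat.eq_zero_or_pos S.card with h | h
  · rw [h]; simp
  · apply mul_le_mul_of_nonneg_left _ (Nat.cast_nonneg _)
    have h2 : ((S.card : ℝ)) ≤ (2:ℝ) ^ m := by exact_mod_cast hS
    have h1 : (1:ℝ) ≤ (S.card : ℝ) := by exact_mod_cast h
    calc Real.logb 2 (S.card : ℝ) ≤ Real.logb 2 ((2:ℝ) ^ m) :=
        Real.logb_le_logb_of_le (by norm_num) (by linarith) h2
      _ = m := by
          rw [Real.logb_pow, Real.logb_self_eq_one (by norm_num), mul_one]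

/-- the generalized splitting reducers -/
def Red {bb cc mm : ℕ} (e : Fin bb ≃ Fin cc × Fin mm) (g : Fin cc) (w : Fin bb → Bool) :
    Finset (Fin bb → Bool) :=
  univ.filter fun u => (∀ j, (e j).1 ≠ g → u j = w j) ∧ (∀ j, (e j).1 = g → w j = false)

lemma mem_Red {bb cc mm : ℕ} {e : Fin bb ≃ Fin cc × Fin mm} {g : Fin cc}
    {w u : Fin bb → Bool} :
    u ∈ Red e g w ↔ (∀ j, (e j).1 ≠ g → u j = w j) ∧ (∀ j, (e j).1 = g → w j = false) := by
  simp [Red]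

lemma Red_card_le {bb cc mm : ℕ} (e : Fin bb ≃ Fin cc × Fin mm) (g : Fin cc)
    (w : Fin bb → Bool) : (Red e g w).card ≤ 2 ^ mm := by
  rw [← card_cube mm]
  apply Finset.card_le_card_of_injOn (fun u => fun k => u (e.symm (g, k)))
  · intro u _
    exact Finset.mem_univ _
  · intro u hu u' hu' huv
    rw [Finset.mem_coe, mem_Red] at hu hu'
    funext j
    rcases eq_or_ne (e j).1 g with hg | hg
    · have hj : e.symm (g, (e j).2) = j := by
        rw [← hg, Prod.mk.eta, Equiv.symm_apply_apply]
      have h2 := congrFun huv (e j).2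
      simp only [] at h2
      rw [hj] at h2
      exact h2
    · rw [hu.1 j hg, hu'.1 j hg]

lemma Red_cover {bb cc mm : ℕ} (e : Fin bb ≃ Fin cc × Fin mm) {u v : Fin bb → Bool}
    (h : hammingDist u v = 1) : ∃ g w, u ∈ Red e g w ∧ v ∈ Red e g w := by
  obtain ⟨j0, hj0, ho⟩ := dist_one h
  refine ⟨(e j0).1, fun j => if (e j).1 = (e j0).1 then false else u j, ?_, ?_⟩
  · rw [mem_Red]
    constructor
    · intro j hg
      rw [if_neg hg]
    · intro j hg
      rw [if_pos hg]
  · rw [mem_Red]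
    constructor
    · intro j hg
      have hne : j ≠ j0 := fun hrfl => hg (by rw [hrfl])
      rw [if_neg hg]
      exact (ho j hne).symm
    · intro j hg
      rw [if_pos hg]

lemma Red_sum {bb cc mm : ℕ} (e : Fin bb ≃ Fin cc × Fin mm) (g : Fin cc) :
    ∑ w : Fin bb → Bool, (Red e g w).card = 2 ^ bb := by
  classical
  have hterm : ∀ w : Fin bb → Bool, (Red e g w).card
      = ∑ u : Fin bb → Bool, if ((∀ j, (e j).1 ≠ g → u j = w j)
          ∧ (∀ j, (e j).1 = g → w j = false)) then 1 else 0 := by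
    intro w
    rw [Red, Finset.card_filter]
  rw [Finset.sum_congr rfl fun w _ => hterm w, Finset.sum_comm]
  have hinner : ∀ u : Fin bb → Bool,
      (∑ w : Fin bb → Bool, if ((∀ j, (e j).1 ≠ g → u j = w j)
          ∧ (∀ j, (e j).1 = g → w j = false)) then 1 else 0) = 1 := by
    intro u
    rw [← Finset.card_filter]
    have hset : ((univ : Finset (Fin bb → Bool)).filter fun w =>
        (∀ j, (e j).1 ≠ g → u j = w j) ∧ (∀ j, (e j).1 = g → w j = false))
        = {fun j => if (e j).1 = g then false else u j} := by
      ext w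
      simp only [Finset.mem_filter, Finset.mem_univ, true_and, Finset.mem_singleton]
      constructor
      · rintro ⟨h1, h2⟩
        funext j
        rcases eq_or_ne (e j).1 g with hg | hg
        · rw [if_pos hg]
          exact h2 j hg
        · rw [if_neg hg]
          exact (h1 j hg).symm
      · rintro rfl
        constructor
        · intro j hg
          simp only [if_neg hg]
        · intro j hg
          simp only [if_pos hg]
    rw [hset, Finset.card_singleton]
  rw [Finset.sum_congr rfl fun u _ => hinner u, Finset.sum_const, Finset.card_univ, smul_eq_mul,
    Fintype.card_fun, Fintype.card_bool, Fintype.card_fin, mul_one]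

end SplitOpt

open SplitOpt



/-- The lower bound `b/log₂ q` is achieved exactly for the Hamming-distance-1
problem when `c ≥ 2` divides `b ≥ 1` and `q = 2^{b/c}`: there is a valid
mapping schema (reducers of size at most `q` covering every pair of `b`-bit
strings at Hamming distance 1) with replication rate exactly `c`, and every
valid mapping schema has replication rate at least `c`.  Hence the minimum
replication rate `r(q)` equals `c = b/log₂ q`. -/
theorem splitting_is_optimal (b c q : ℕ) (hb : 1 ≤ b) (hc : 2 ≤ c)
    (hdvd : c ∣ b) (hq : q = 2 ^ (b / c)) :
    (∃ (p : ℕ) (R : Fin p → Finset (Fin b → Bool)),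
        (∀ i, (R i).card ≤ q) ∧
        (∀ u v : Fin b → Bool, hammingDist u v = 1 → ∃ i, u ∈ R i ∧ v ∈ R i) ∧
        (∑ i, ((R i).card : ℝ)) / 2 ^ b = (c : ℝ)) ∧
    (∀ (p : ℕ) (R : Fin p → Finset (Fin b → Bool)),
        (∀ i, (R i).card ≤ q) →
        (∀ u v : Fin b → Bool, hammingDist u v = 1 → ∃ i, u ∈ R i ∧ v ∈ R i) →
        (c : ℝ) ≤ (∑ i, ((R i).card : ℝ)) / 2 ^ b) := by
  classical
  set m := b / c with hm
  have hbcm : b = c * m := (Nat.mul_div_cancel' hdvd).symm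
  have hm1 : 1 ≤ m := by
    rcases Nat.eq_zero_or_pos m with h | h
    · rw [h, mul_zero] at hbcm; omega
    · exact h
  have h2b : (0:ℝ) < 2 ^ b := by positivity
  constructor
  · -- upper bound: generalized splitting
    set e : Fin b ≃ Fin c × Fin m := (finCongr hbcm).trans finProdFinEquiv.symm with he
    have hcard : Fintype.card (Fin c × (Fin b → Bool)) = c * 2 ^ b := by
      simp [Fintype.card_prod, Fintype.card_fun, Fintype.card_bool, Fintype.card_fin]
    set e2 := Fintype.equivFinOfCardEq hcard with he2
    refine ⟨c * 2 ^ b, fun i => Red e (e2.symm i).1 (e2.symm i).2, ?_, ?_, ?_⟩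
    · intro i
      rw [hq]
      exact Red_card_le e _ _
    · intro u v huv
      obtain ⟨g, w, hu, hv⟩ := Red_cover e huv
      refine ⟨e2 (g, w), ?_, ?_⟩
      · simp only [Equiv.symm_apply_apply]
        exact hu
      · simp only [Equiv.symm_apply_apply]
        exact hv
    · have hsum : (∑ i : Fin (c * 2 ^ b), ((Red e (e2.symm i).1 (e2.symm i).2).card : ℝ))
          = ∑ x : Fin c × (Fin b → Bool), ((Red e x.1 x.2).card : ℝ) :=
        Equiv.sum_comp e2.symm (fun x => ((Red e x.1 x.2).card : ℝ))
      rw [hsum, Fintype.sum_prod_type]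
      have hg : ∀ g : Fin c, (∑ w : Fin b → Bool, ((Red e g w).card : ℝ)) = 2 ^ b := by
        intro g
        rw [← Nat.cast_sum, Red_sum e g]
        norm_cast
      rw [Finset.sum_congr rfl fun g _ => hg g, Finset.sum_const, Finset.card_univ,
        Fintype.card_fin, nsmul_eq_mul]
      field_simp
  · -- lower bound
    intro p R hRcard hcov
    have h1 : (b : ℝ) * 2 ^ b ≤ (∑ i, ((R i).card : ℝ)) * m := by
      have hnat := cover_le R hcov
      have hreal : ((b * 2 ^ b : ℕ) : ℝ) ≤ ((∑ i, Ep b (R i) : ℕ) : ℝ) := Nat.cast_le.mpr hnat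
      push_cast at hreal
      refine le_trans hreal ?_
      rw [Finset.sum_mul]
      apply Finset.sum_le_sum
      intro i _
      exact card_term_le m (R i) (by rw [← hq]; exact hRcard i)
    have hm0 : (0:ℝ) < m := by exact_mod_cast hm1
    have hb' : (b:ℝ) = c * m := by exact_mod_cast hbcm
    rw [hb'] at h1
    have h1' : ((c:ℝ) * 2 ^ b) * m ≤ (∑ i, ((R i).card : ℝ)) * m := by
      calc ((c:ℝ) * 2 ^ b) * m = (c * m) * 2 ^ b := by ring
      _ ≤ _ := h1
    have h2 : (c:ℝ) * 2 ^ b ≤ ∑ i, ((R i).card : ℝ) := le_of_mul_le_mul_right h1' hm0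
    rw [le_div_iff₀ h2b]
    exact h2
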